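/- Let θ be a real number with 0 < θ < 1, let φ and φ′ be real numbers with 0 ≤ φ < φ′ ≤ 2π, set c = exp(((φ + φ′)/2)√−1) (the midpoint of the arc A(φ, φ′)) and r = (2/θ)·sin((φ′ − φ)/4). Then for every point t = exp(ψ√−1) with φ ≤ ψ < φ′ and every s ∈ ℂ with |s − c| > r, one has |t − c| ≤ θ·|s − c|; i.e., the semi-open arc A(φ, φ′) and the exterior of the disc D(c, r) = { z : |z − c| ≤ r } are (θ, c)-separated. -/

import Mathlib

lemma abs_exp_mul_I_sub_one (x : ℝ) :
    ‖Complex.exp (x * Complex.I) - 1‖ = 2 * |Real.sin (x / 2)| := by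
  rw [Complex.exp_mul_I]
  rw [show (Complex.cos x + Complex.sin x * Complex.I - 1)
      = Complex.ofReal (Real.cos x - 1) + Complex.ofReal (Real.sin x) * Complex.I by
    push_cast; ring]
  rw [Complex.norm_def, Complex.normSq_add_mul_I]
  have h : (Real.cos x - 1) ^ 2 + Real.sin x ^ 2 = 2 * (1 - Real.cos x) := by
    have := Real.sin_sq_add_cos_sq x; nlinarith
  rw [h, Real.abs_sin_half]
  rw [show (2 : ℝ) * (1 - Real.cos x) = 2 ^ 2 * ((1 - Real.cos x) / 2) by ring]
  rw [Real.sqrt_mul (by positivity), Real.sqrt_sq (by norm_num)]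

lemma abs_exp_mul_I_sub_exp_mul_I (a b : ℝ) :
    ‖Complex.exp (a * Complex.I) - Complex.exp (b * Complex.I)‖
      = 2 * |Real.sin ((a - b) / 2)| := by
  have : Complex.exp (a * Complex.I) - Complex.exp (b * Complex.I)
      = Complex.exp (b * Complex.I) * (Complex.exp ((↑(a - b) : ℂ) * Complex.I) - 1) := by
    rw [mul_sub, ← Complex.exp_add, mul_one]
    push_cast; ring_nf
  rw [this, norm_mul, Complex.norm_exp, abs_exp_mul_I_sub_one]
  simp [Complex.mul_I_re]

/-- Lemma 7.3 of the paper: the semi-open arc `A(φ, φ')` of the unit circle and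
the exterior of the disc `D(c, r)` centered at the arc's midpoint
`c = e^{((φ+φ')/2)i}` with radius `r = (2/θ) sin((φ' - φ)/4)` are
`(θ, c)`-separated. -/
theorem arc_and_disc_exterior_separated (θ : ℝ) (hθ0 : 0 < θ) (hθ1 : θ < 1)
    (φ φ' : ℝ) (h1 : 0 ≤ φ) (h2 : φ < φ') (h3 : φ' ≤ 2 * Real.pi)
    (c : ℂ) (hc : c = Complex.exp (((φ + φ') / 2) * Complex.I))
    (r : ℝ) (hr : r = (2 / θ) * Real.sin ((φ' - φ) / 4)) :
    ∀ ψ : ℝ, φ ≤ ψ → ψ < φ' → ∀ s : ℂ, r < ‖s - c‖ →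
      ‖Complex.exp (ψ * Complex.I) - c‖ ≤ θ * ‖s - c‖ := by
  intro ψ hψ1 hψ2 s hs
  have hπ : 0 < Real.pi := Real.pi_pos
  set μ : ℝ := (φ + φ') / 2 with hμ
  have hct : ‖Complex.exp (ψ * Complex.I) - c‖
      = 2 * |Real.sin ((ψ - μ) / 2)| := by
    rw [hc, show ((↑φ + ↑φ' : ℂ)) / 2 = ((μ : ℝ) : ℂ) by rw [hμ]; push_cast; ring]
    exact abs_exp_mul_I_sub_exp_mul_I ψ μ
  set δ : ℝ := (φ' - φ) / 4 with hδ
  have hδ0 : 0 < δ := by simp [hδ]; linarith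
  have hδπ : δ ≤ Real.pi / 2 := by rw [hδ]; linarith
  have habs : |(ψ - μ) / 2| ≤ δ := by
    rw [abs_le]; constructor <;> [skip; skip] <;> simp [hμ, hδ] <;> linarith
  have hsinle : |Real.sin ((ψ - μ) / 2)| ≤ Real.sin δ := by
    have h1' : |Real.sin ((ψ - μ) / 2)| = Real.sin |(ψ - μ) / 2| := by
      rcases le_or_gt 0 ((ψ - μ) / 2) with h | h
      · rw [abs_of_nonneg h, abs_of_nonneg]
        exact Real.sin_nonneg_of_nonneg_of_le_pi h
          (by linarith [(abs_le.mp habs).2, abs_of_nonneg h])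
      · rw [abs_of_neg h, Real.sin_neg, abs_of_nonpos]
        exact Real.sin_nonpos_of_nonpos_of_neg_pi_le h.le
          (by linarith [(abs_le.mp habs).1, abs_of_neg h])
    rw [h1']
    exact Real.strictMonoOn_sin.monotoneOn
      ⟨by linarith [abs_nonneg ((ψ - μ) / 2)], by linarith [habs]⟩
      ⟨by linarith, hδπ⟩ habs
  have hsinδ : 0 < Real.sin δ := Real.sin_pos_of_pos_of_lt_pi hδ0 (by linarith)
  have hθr : θ * r = 2 * Real.sin δ := by
    rw [hr]; field_simp
  calc ‖Complex.exp (ψ * Complex.I) - c‖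
      = 2 * |Real.sin ((ψ - μ) / 2)| := hct
    _ ≤ 2 * Real.sin δ := by linarith
    _ = θ * r := hθr.symm
    _ ≤ θ * ‖s - c‖ := by nlinarith
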